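/- Let σ > 0 and let X and Y be independent real random variables with X Gaussian with mean m₁ and variance σ²/2 and Y Gaussian with mean m₂ and variance σ²/2. Set a = m₁² + m₂². Then for every y ≥ 0, the probability P(X² + Y² ≤ y) equals ∫₀^y (1/σ²) e^{-(x+a)/σ²} I₀( 2√(x a)/σ² ) dx; i.e., X² + Y² has the noncentral chi-squared density (with two degrees of freedom) with noncentrality a. -/

import Mathlib

open MeasureTheory ProbabilityTheory Real
open scoped ENNReal NNReal

/-- Modified Bessel function of the first kind, order zero: I₀(z) = ∑ (z/2)^{2m}/(m!)². -/
noncomputable def besselI0 (z : ℝ) : ℝ := ∑' m : ℕ, (z / 2) ^ (2 * m) / ((Nat.factorial m : ℝ)) ^ 2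

section aux
open intervalIntegral Finset

lemma prod_half (m : ℕ) : ∏ i ∈ range m, ((2*(i:ℝ)+1)/(2*i+2)) = (Nat.factorial (2*m) : ℝ) / (4^m * (Nat.factorial m)^2) := by
  induction m with
  | zero => simp
  | succ k ih =>
    rw [prod_range_succ, ih]
    have h1 : (Nat.factorial (2*(k+1)) : ℝ) = (2*k+2) * ((2*k+1) * Nat.factorial (2*k)) := by
      have : 2*(k+1) = (2*k+1)+1 := by ring
      rw [this, Nat.factorial_succ, Nat.factorial_succ]
      push_cast; ring
    rw [h1]
    have h2 : (Nat.factorial (k+1) : ℝ) = (k+1) * Nat.factorial k := by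
      rw [Nat.factorial_succ]; push_cast; ring
    rw [h2]
    have hf : (Nat.factorial k : ℝ) ≠ 0 := Nat.cast_ne_zero.mpr (Nat.factorial_ne_zero k)
    have h4 : (4:ℝ)^k ≠ 0 := by positivity
    field_simp
    ring

lemma cos_pow_even (m : ℕ) : ∫ x in (0:ℝ)..(2*π), cos x ^ (2*m) = 2*π * ((Nat.factorial (2*m) : ℝ) / (4^m * (Nat.factorial m)^2)) := by
  induction m with
  | zero => simp
  | succ k ih =>
    have h : 2*(k+1) = 2*k+2 := by ring
    rw [h, integral_cos_pow, ih]
    simp [Real.sin_two_pi]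
    have := prod_half (k+1)
    rw [show 2*(k+1) = 2*k+2 from by ring] at this
    rw [← prod_half k]
    rw [prod_range_succ] at this
    rw [show (2*(k:ℝ)+2) = 2*k+2 from rfl] at this
    rw [← this]
    ring

lemma cos_pow_odd (m : ℕ) : ∫ x in (0:ℝ)..(2*π), cos x ^ (2*m+1) = 0 := by
  have := integral_sin_pow_mul_cos_pow_odd (a := 0) (b := 2*π) 0 m
  simpa [Real.sin_two_pi] using this




lemma besselI0_summable (z : ℝ) : Summable (fun m : ℕ => (z / 2) ^ (2 * m) / ((Nat.factorial m : ℝ)) ^ 2) := by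
  apply Summable.of_nonneg_of_le
    (fun m => div_nonneg (Even.pow_nonneg ⟨m, by ring⟩ _) (by positivity)) (fun m => ?_)
    (Real.summable_pow_div_factorial ((z/2)^2))
  rw [pow_mul]
  have h1 : (1:ℝ) ≤ Nat.factorial m := by
    exact_mod_cast Nat.one_le_iff_ne_zero.mpr (Nat.factorial_ne_zero m)
  have h2 : (Nat.factorial m : ℝ) ≤ (Nat.factorial m : ℝ)^2 := by nlinarith
  gcongr

lemma exp_cos_integral (z : ℝ) :
    ∫ θ in (0:ℝ)..(2*π), Real.exp (z * Real.cos θ) = 2*π * besselI0 z := by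
  have h2π : (0:ℝ) ≤ 2*π := by positivity
  have hexp : ∀ θ : ℝ, Real.exp (z * Real.cos θ) = ∑' n : ℕ, (z * Real.cos θ)^n / (Nat.factorial n) := by
    intro θ
    rw [Real.exp_eq_exp_ℝ, NormedSpace.exp_eq_tsum_div]
  rw [intervalIntegral.integral_of_le h2π]
  simp_rw [hexp]
  rw [MeasureTheory.integral_tsum]
  · have heach : ∀ n : ℕ, (∫ θ in Set.Ioc (0:ℝ) (2*π), (z * Real.cos θ)^n / (Nat.factorial n)) 
        = z^n / (Nat.factorial n) * ∫ θ in (0:ℝ)..(2*π), Real.cos θ ^ n := by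
      intro n
      rw [intervalIntegral.integral_of_le h2π, ← MeasureTheory.integral_const_mul]
      congr 1 with θ
      rw [mul_pow]; ring
    simp_rw [heach]
    rw [← tsum_even_add_odd]
    · have hodd : ∀ m : ℕ, z^(2*m+1) / (Nat.factorial (2*m+1)) * ∫ θ in (0:ℝ)..(2*π), Real.cos θ ^ (2*m+1) = 0 := by
        intro m; rw [cos_pow_odd]; ring
      simp_rw [hodd, tsum_zero, add_zero, cos_pow_even]
      rw [besselI0, ← tsum_mul_left]
      congr 1 with m
      have hf : (Nat.factorial (2*m) : ℝ) ≠ 0 := Nat.cast_ne_zero.mpr (Nat.factorial_ne_zero _)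
      have h4 : (4:ℝ)^m = 2^(2*m) := by rw [pow_mul]; norm_num
      rw [div_pow, h4]
      field_simp
    · apply Summable.congr (f := fun m : ℕ => 2*π*((z / 2) ^ (2 * m) / ((Nat.factorial m : ℝ)) ^ 2))
      · exact (besselI0_summable z).mul_left _
      · intro m
        rw [cos_pow_even]
        have hf : (Nat.factorial (2*m) : ℝ) ≠ 0 := Nat.cast_ne_zero.mpr (Nat.factorial_ne_zero _)
        have h4 : (4:ℝ)^m = 2^(2*m) := by rw [pow_mul]; norm_num
        rw [div_pow, h4]
        field_simp
    · apply Summable.congr (f := fun _ : ℕ => (0:ℝ)) summable_zero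
      intro m; rw [cos_pow_odd]; ring
  · intro n
    apply Measurable.aestronglyMeasurable
    fun_prop
  · apply ne_of_lt
    calc ∑' n : ℕ, ∫⁻ θ in Set.Ioc (0:ℝ) (2*π), ‖(z * Real.cos θ)^n / (Nat.factorial n)‖₊
        ≤ ∑' n : ℕ, ENNReal.ofReal (|z|^n / (Nat.factorial n) * (2*π)) := by
          apply ENNReal.tsum_le_tsum
          intro n
          calc ∫⁻ θ in Set.Ioc (0:ℝ) (2*π), ‖(z * Real.cos θ)^n / (Nat.factorial n)‖₊
              ≤ ∫⁻ _ in Set.Ioc (0:ℝ) (2*π), ENNReal.ofReal (|z|^n / (Nat.factorial n)) := by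
                apply lintegral_mono
                intro θ
                simp only
                rw [← ENNReal.ofReal_coe_nnreal, coe_nnnorm]
                apply ENNReal.ofReal_le_ofReal
                rw [norm_div, norm_pow, norm_mul]
                simp only [Real.norm_eq_abs, Nat.abs_cast]
                have hc : |z| * |Real.cos θ| ≤ |z| :=
                  mul_le_of_le_one_right (abs_nonneg z) (abs_cos_le_one θ)
                gcongr
            _ = ENNReal.ofReal (|z|^n / (Nat.factorial n)) * volume (Set.Ioc (0:ℝ) (2*π)) := by
                rw [setLIntegral_const]
            _ ≤ ENNReal.ofReal (|z|^n / (Nat.factorial n) * (2*π)) := by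
                rw [Real.volume_Ioc, sub_zero, ← ENNReal.ofReal_mul (by positivity)]
      _ < ⊤ := by
          rw [← ENNReal.ofReal_tsum_of_nonneg (fun n => by positivity)]
          · exact ENNReal.ofReal_lt_top
          · exact (Real.summable_pow_div_factorial |z|).mul_right _




lemma besselI0_continuous : Continuous besselI0 := by
  rw [continuous_iff_continuousAt]
  intro z
  have hR : z ∈ Set.Ioo (-(|z|+1)) (|z|+1) := by
    constructor <;> cases' abs_cases z with h h <;> linarith [h.1, abs_nonneg z]
  set R := |z| + 1 with hRdef
  have hcont : ContinuousOn besselI0 (Set.Ioo (-R) R) := by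
    apply continuousOn_tsum (u := fun m : ℕ => (R / 2) ^ (2 * m) / ((Nat.factorial m : ℝ)) ^ 2)
    · intro m; fun_prop
    · exact besselI0_summable R
    · intro m x hx
      have h1 : |x| ≤ R := by
        rw [abs_le]; exact ⟨(hx.1).le, hx.2.le⟩
      have heq : ‖(x / 2) ^ (2 * m) / ((Nat.factorial m : ℝ)) ^ 2‖
          = |x/2|^(2*m) / ((Nat.factorial m : ℝ))^2 := by
        rw [Real.norm_eq_abs, abs_div, abs_pow, abs_sq]
      rw [heq]
      have h3 : |x/2| ≤ R/2 := by
        rw [abs_div, abs_of_nonneg (by norm_num : (0:ℝ) ≤ 2)]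
        gcongr
      gcongr
  exact hcont.continuousAt (Ioo_mem_nhds hR.1 hR.2)

lemma rotation_integral (c m₁ m₂ : ℝ) :
    ∫ θ in (-π)..π, Real.exp (c * (m₁ * Real.cos θ + m₂ * Real.sin θ))
      = 2*π * besselI0 (c * Real.sqrt (m₁^2 + m₂^2)) := by
  set s : ℝ := Real.sqrt (m₁^2 + m₂^2) with hs
  obtain ⟨φ, hφ1, hφ2⟩ : ∃ φ, m₁ = s * Real.cos φ ∧ m₂ = s * Real.sin φ := by
    by_cases h : (⟨m₁, m₂⟩ : ℂ) = 0
    · have h1 : m₁ = 0 := congrArg Complex.re h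
      have h2 : m₂ = 0 := congrArg Complex.im h
      exact ⟨0, by simp [h1, h2, hs]⟩
    · have habs : ‖(⟨m₁, m₂⟩ : ℂ)‖ = s := by
        rw [Complex.norm_def, Complex.normSq_mk, hs]; ring_nf
      have hs0 : s ≠ 0 := by
        rw [← habs]
        simpa using h
      refine ⟨Complex.arg ⟨m₁, m₂⟩, ?_, ?_⟩
      · have := Complex.cos_arg h
        rw [habs] at this
        rw [this]; field_simp
      · have := Complex.sin_arg (⟨m₁, m₂⟩ : ℂ)
        rw [habs] at this
        rw [this]; field_simp
  have hkey : ∀ θ : ℝ, c * (m₁ * Real.cos θ + m₂ * Real.sin θ) = (c * s) * Real.cos (θ - φ) := by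
    intro θ
    rw [Real.cos_sub, hφ1, hφ2]; ring
  simp_rw [hkey]
  have hper : Function.Periodic (fun u => Real.exp ((c*s) * Real.cos u)) (2*π) := fun u => by
    simp [Real.cos_add_two_pi]
  calc ∫ θ in (-π)..π, Real.exp ((c*s) * Real.cos (θ - φ))
      = ∫ u in (-π - φ)..(π - φ), Real.exp ((c*s) * Real.cos u) := by
        rw [← intervalIntegral.integral_comp_sub_right]
    _ = ∫ u in (0:ℝ)..(2*π), Real.exp ((c*s) * Real.cos u) := by
        have := hper.intervalIntegral_add_eq (t := -π - φ) (s := 0)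
        rw [show -π - φ + 2*π = π - φ by ring, zero_add] at this
        exact this
    _ = 2*π * besselI0 (c * s) := exp_cos_integral (c*s)

lemma gaussian_prod_wd (m₁ m₂ : ℝ) {v : ℝ≥0} (hv : v ≠ 0) :
    (gaussianReal m₁ v).prod (gaussianReal m₂ v)
      = ((volume : Measure ℝ).prod volume).withDensity
          (fun p => gaussianPDF m₁ v p.1 * gaussianPDF m₂ v p.2) := by
  refine Measure.prod_eq fun s t hs ht => ?_
  rw [withDensity_apply _ (hs.prod ht), ← Measure.prod_restrict,
    MeasureTheory.lintegral_prod_mul ((measurable_gaussianPDF m₁ v).aemeasurable)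
      ((measurable_gaussianPDF m₂ v).aemeasurable),
    gaussianReal_apply _ hv, gaussianReal_apply _ hv]

end aux

/-- The sum of squares of two independent Gaussians with common variance σ²/2 has the
noncentral chi-squared density with noncentrality a = m₁² + m₂². -/





theorem stmt3 {Ω : Type*} [MeasureSpace Ω] [IsProbabilityMeasure (ℙ : Measure Ω)]
    (σ m₁ m₂ : ℝ) (hσ : 0 < σ) (X Y : Ω → ℝ) (hX : Measurable X) (hY : Measurable Y)
    (hXlaw : Measure.map X ℙ = gaussianReal m₁ (Real.toNNReal (σ ^ 2 / 2)))
    (hYlaw : Measure.map Y ℙ = gaussianReal m₂ (Real.toNNReal (σ ^ 2 / 2)))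
    (hindep : IndepFun X Y ℙ) (y : ℝ) (hy : 0 ≤ y) :
    (ℙ {ω | X ω ^ 2 + Y ω ^ 2 ≤ y}).toReal
      = ∫ x in (0:ℝ)..y, (1 / σ ^ 2) * Real.exp (-(x + (m₁ ^ 2 + m₂ ^ 2)) / σ ^ 2) *
          besselI0 (2 * Real.sqrt (x * (m₁ ^ 2 + m₂ ^ 2)) / σ ^ 2) := by
  set v : ℝ≥0 := Real.toNNReal (σ ^ 2 / 2) with hvdef
  have hσ2 : (0:ℝ) < σ^2 := by positivity
  have hvr : (v : ℝ) = σ^2/2 := Real.coe_toNNReal _ (by positivity)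
  have hv : v ≠ 0 := by
    intro h0
    rw [h0] at hvr
    simp at hvr
    nlinarith
  set a : ℝ := m₁^2 + m₂^2 with hadef
  have ha : 0 ≤ a := by positivity
  set D : Set (ℝ × ℝ) := {p | p.1^2 + p.2^2 ≤ y} with hDdef
  have hD : MeasurableSet D := measurableSet_le (by fun_prop) measurable_const
  set F : ℝ × ℝ → ℝ := fun p => gaussianPDFReal m₁ v p.1 * gaussianPDFReal m₂ v p.2 with hFdef
  set G : ℝ × ℝ → ℝ := D.indicator F with hGdef
  have hFmeas : Measurable F :=
    ((measurable_gaussianPDFReal m₁ v).comp measurable_fst).mul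
      ((measurable_gaussianPDFReal m₂ v).comp measurable_snd)
  have hFint : Integrable F ((volume : Measure ℝ).prod volume) :=
    (integrable_gaussianPDFReal m₁ v).mul_prod (integrable_gaussianPDFReal m₂ v)
  have hFnonneg : ∀ p, 0 ≤ F p := fun p =>
    mul_nonneg (gaussianPDFReal_nonneg _ _ _) (gaussianPDFReal_nonneg _ _ _)
  -- Step 1: the probability as a product measure
  have step1 : ℙ {ω | X ω ^ 2 + Y ω ^ 2 ≤ y}
      = ((gaussianReal m₁ v).prod (gaussianReal m₂ v)) D := by
    have hmap : Measure.map (fun ω => (X ω, Y ω)) ℙ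
        = (gaussianReal m₁ v).prod (gaussianReal m₂ v) := by
      rw [← hXlaw, ← hYlaw]
      exact (indepFun_iff_map_prod_eq_prod_map_map hX.aemeasurable hY.aemeasurable).mp hindep
    rw [← hmap, Measure.map_apply (hX.prodMk hY) hD]
    rfl
  -- Step 2: toReal equals integral of the density over D
  have step2 : (((gaussianReal m₁ v).prod (gaussianReal m₂ v)) D).toReal
      = ∫ p in D, F p ∂((volume : Measure ℝ).prod volume) := by
    rw [gaussian_prod_wd m₁ m₂ hv, withDensity_apply _ hD]
    have hof : ∀ p : ℝ × ℝ, gaussianPDF m₁ v p.1 * gaussianPDF m₂ v p.2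
        = ENNReal.ofReal (F p) := by
      intro p
      rw [hFdef, ENNReal.ofReal_mul (gaussianPDFReal_nonneg _ _ _)]
      rfl
    simp_rw [hof]
    rw [← ofReal_integral_eq_lintegral_ofReal (hFint.restrict)
      (ae_of_all _ hFnonneg), ENNReal.toReal_ofReal]
    exact integral_nonneg (fun p => hFnonneg p)
  -- Step 3: polar coordinates
  have step3 : (∫ p in D, F p ∂((volume : Measure ℝ).prod volume))
      = ∫ p in polarCoord.target, p.1 • G (polarCoord.symm p) := by
    rw [← Measure.volume_eq_prod, ← integral_indicator hD, ← hGdef,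
      ← integral_comp_polarCoord_symm]
  -- integrability on the target
  have hGint : Integrable G := by
    rw [Measure.volume_eq_prod]; exact hFint.indicator hD
  have hIntTarget : IntegrableOn (fun p : ℝ × ℝ => p.1 • G (polarCoord.symm p))
      polarCoord.target := by
    set B : ℝ × ℝ → ℝ × ℝ →L[ℝ] ℝ × ℝ := fun p =>
      LinearMap.toContinuousLinearMap (Matrix.toLin (Module.Basis.finTwoProd ℝ) (Module.Basis.finTwoProd ℝ)
        !![Real.cos p.2, -p.1 * Real.sin p.2; Real.sin p.2, p.1 * Real.cos p.2]) with hB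
    have A : ∀ p ∈ polarCoord.target, HasFDerivWithinAt polarCoord.symm (B p) polarCoord.target p :=
      fun p _ => (hasFDerivAt_polarCoord_symm p).hasFDerivWithinAt
    have B_det : ∀ p, (B p).det = p.1 := by
      intro p
      conv_rhs => rw [← one_mul p.1, ← cos_sq_add_sin_sq p.2]
      simp only [hB, neg_mul, LinearMap.det_toContinuousLinearMap, LinearMap.det_toLin,
        Matrix.det_fin_two_of, sub_neg_eq_add]
      ring
    have hinj : Set.InjOn polarCoord.symm polarCoord.target := polarCoord.symm.injOn
    have himg : polarCoord.symm '' polarCoord.target = polarCoord.source :=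
      polarCoord.symm_image_target_eq_source
    have h1 : IntegrableOn G polarCoord.source := hGint.integrableOn
    rw [← himg, integrableOn_image_iff_integrableOn_abs_det_fderiv_smul volume
      polarCoord.open_target.measurableSet A hinj G] at h1
    apply h1.congr_fun ?_ polarCoord.open_target.measurableSet
    intro p hp
    have hp1 : 0 < p.1 := by
      rw [polarCoord_target] at hp
      exact hp.1
    simp only [B_det, abs_of_pos hp1]
  -- Step 4: Fubini
  have step4 : (∫ p in polarCoord.target, p.1 • G (polarCoord.symm p))
      = ∫ r in Set.Ioi (0:ℝ), ∫ θ in Set.Ioo (-π) π, r • G (polarCoord.symm (r, θ)) := by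
    rw [polarCoord_target] at hIntTarget ⊢
    rw [Measure.volume_eq_prod, setIntegral_prod _ hIntTarget]
  -- Step 5: inner integral
  set gOut : ℝ → ℝ := Set.indicator {r : ℝ | r^2 ≤ y}
    (fun r => r * ((2/σ^2) * Real.exp (-(r^2+a)/σ^2) * besselI0 (2*r*Real.sqrt a/σ^2)))
    with hgOutdef
  have step5 : ∀ r ∈ Set.Ioi (0:ℝ),
      (∫ θ in Set.Ioo (-π) π, r • G (polarCoord.symm (r, θ))) = gOut r := by
    intro r hr
    have hr0 : 0 < r := hr
    have hpt : ∀ θ : ℝ, (r * Real.cos θ)^2 + (r * Real.sin θ)^2 = r^2 := by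
      intro θ
      have := sin_sq_add_cos_sq θ
      nlinarith
    by_cases hr2 : r^2 ≤ y
    · have hmem : ∀ θ : ℝ, polarCoord.symm (r, θ) ∈ D := by
        intro θ
        rw [polarCoord_symm_apply]
        show (r * Real.cos θ)^2 + (r * Real.sin θ)^2 ≤ y
        rw [hpt θ]; exact hr2
      have hGeq : ∀ θ : ℝ, G (polarCoord.symm (r, θ)) = F (polarCoord.symm (r, θ)) :=
        fun θ => Set.indicator_of_mem (hmem θ) F
      have hexp : ∀ θ : ℝ, r • G (polarCoord.symm (r, θ))
          = (r * (π*σ^2)⁻¹ * Real.exp (-(r^2+a)/σ^2)) *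
            Real.exp ((2*r/σ^2) * (m₁ * Real.cos θ + m₂ * Real.sin θ)) := by
        intro θ
        rw [hGeq θ, polarCoord_symm_apply]
        show r * (gaussianPDFReal m₁ v (r * Real.cos θ) * gaussianPDFReal m₂ v (r * Real.sin θ)) = _
        rw [gaussianPDFReal, gaussianPDFReal, hvr]
        have hs : Real.sqrt (2*π*(σ^2/2)) * Real.sqrt (2*π*(σ^2/2)) = π * σ^2 := by
          rw [Real.mul_self_sqrt (by positivity)]; ring
        have harg : -(r * Real.cos θ - m₁)^2/(2*(σ^2/2)) + -(r * Real.sin θ - m₂)^2/(2*(σ^2/2))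
            = -(r^2+a)/σ^2 + (2*r/σ^2) * (m₁ * Real.cos θ + m₂ * Real.sin θ) := by
          have hpy := sin_sq_add_cos_sq θ
          rw [hadef]
          field_simp
          linear_combination (-(r^2)) * hpy
        calc r * ((Real.sqrt (2*π*(σ^2/2)))⁻¹ * Real.exp (-(r * Real.cos θ - m₁)^2/(2*(σ^2/2))) *
              ((Real.sqrt (2*π*(σ^2/2)))⁻¹ * Real.exp (-(r * Real.sin θ - m₂)^2/(2*(σ^2/2)))))
            = r * (Real.sqrt (2*π*(σ^2/2)) * Real.sqrt (2*π*(σ^2/2)))⁻¹ *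
              Real.exp (-(r * Real.cos θ - m₁)^2/(2*(σ^2/2)) + -(r * Real.sin θ - m₂)^2/(2*(σ^2/2))) := by
              rw [Real.exp_add, mul_inv]; ring
          _ = _ := by
              rw [hs, harg, Real.exp_add]; ring
      simp_rw [hexp]
      rw [MeasureTheory.integral_const_mul, ← MeasureTheory.integral_Ioc_eq_integral_Ioo,
        ← intervalIntegral.integral_of_le (by linarith [pi_pos] : -π ≤ π),
        rotation_integral (2*r/σ^2) m₁ m₂, ← hadef]
      rw [hgOutdef, Set.indicator_of_mem (by exact hr2 : r ∈ {r : ℝ | r^2 ≤ y})]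
      have hb : (2*r/σ^2) * Real.sqrt a = 2*r*Real.sqrt a/σ^2 := by ring
      rw [hb]
      have hπ : (π : ℝ) ≠ 0 := Real.pi_ne_zero
      field_simp
    · have hnmem : ∀ θ : ℝ, polarCoord.symm (r, θ) ∉ D := by
        intro θ
        rw [polarCoord_symm_apply]
        show ¬((r * Real.cos θ)^2 + (r * Real.sin θ)^2 ≤ y)
        rw [hpt θ]; exact hr2
      have hGeq : ∀ θ : ℝ, r • G (polarCoord.symm (r, θ)) = 0 := by
        intro θ
        rw [hGdef, Set.indicator_of_notMem (hnmem θ) F, smul_zero]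
      simp_rw [hGeq]
      rw [MeasureTheory.integral_zero, hgOutdef,
        Set.indicator_of_notMem (by exact hr2 : r ∉ {r : ℝ | r^2 ≤ y})]
  -- Step 6: outer integral
  have step6 : (∫ r in Set.Ioi (0:ℝ), gOut r)
      = ∫ x in (0:ℝ)..y, (1 / σ ^ 2) * Real.exp (-(x + a) / σ ^ 2) *
          besselI0 (2 * Real.sqrt (x * a) / σ ^ 2) := by
    rw [hgOutdef, MeasureTheory.setIntegral_indicator (measurableSet_le (by fun_prop) measurable_const)]
    have hset : Set.Ioi (0:ℝ) ∩ {r : ℝ | r^2 ≤ y} = Set.Ioc 0 (Real.sqrt y) := by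
      ext r
      simp only [Set.mem_inter_iff, Set.mem_Ioi, Set.mem_setOf_eq, Set.mem_Ioc]
      constructor
      · rintro ⟨h1, h2⟩; exact ⟨h1, (Real.le_sqrt' h1).mpr h2⟩
      · rintro ⟨h1, h2⟩; exact ⟨h1, (Real.le_sqrt' h1).mp h2⟩
    rw [hset, ← intervalIntegral.integral_of_le (Real.sqrt_nonneg y)]
    set g : ℝ → ℝ := fun x => (1/σ^2) * Real.exp (-(x+a)/σ^2) * besselI0 (2*Real.sqrt (x*a)/σ^2)
      with hgdef
    have hgcont : Continuous g := by
      apply Continuous.mul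
      · exact continuous_const.mul (Real.continuous_exp.comp (by fun_prop))
      · exact besselI0_continuous.comp (by fun_prop)
    have hEq : Set.EqOn
        (fun r => r * ((2/σ^2) * Real.exp (-(r^2+a)/σ^2) * besselI0 (2*r*Real.sqrt a/σ^2)))
        (fun r => (2*r) • ((g ∘ (fun x => x^2)) r)) (Set.uIcc 0 (Real.sqrt y)) := by
      intro r hrmem
      have hr0 : 0 ≤ r := by
        rw [Set.uIcc_of_le (Real.sqrt_nonneg y)] at hrmem
        exact hrmem.1
      have hsq : Real.sqrt (r^2 * a) = r * Real.sqrt a := by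
        rw [Real.sqrt_mul (sq_nonneg r), Real.sqrt_sq hr0]
      simp only [Function.comp_apply, hgdef, smul_eq_mul, hsq]
      ring
    rw [intervalIntegral.integral_congr hEq,
      intervalIntegral.integral_comp_smul_deriv (f := fun r : ℝ => r^2) (f' := fun r : ℝ => 2*r)
        (fun x _ => by simpa using hasDerivAt_pow 2 x) (by fun_prop) hgcont]
    norm_num [Real.sq_sqrt hy, hgdef]
  rw [step1, step2, step3, step4, setIntegral_congr_fun measurableSet_Ioi step5, step6]
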